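/- Let q = a/b with a, b coprime positive integers, b ≥ 2 and a > b (so q ∈ ℚ_{>1} \ ℕ). In the monoid N₀[q], any minimum-length factorization of the element aᵏ uses only atoms qⁱ with i ≥ k; moreover it can be written as ∑_{i=k}^{m} n_i qⁱ with all coefficients n_i ∈ {0, 1, …, a−1}. -/

import Mathlib

open Polynomial

/-- `N₀[q]`: the additive submonoid of ℚ generated by the powers of `q`. -/
def NmonQ (q : ℚ) : AddSubmonoid ℚ := AddSubmonoid.closure (Set.range fun n : ℕ => q ^ n)

/-- Evaluation of a polynomial with ℕ-coefficients at a rational number. -/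
def pevQ (q : ℚ) (f : Polynomial ℕ) : ℚ := Polynomial.eval₂ (Nat.castRingHom ℚ) q f

/-- Lengths of factorizations of `x` in `N₀[q]` (representations `x = ∑ nᵢ qⁱ`). -/
def LSetQ (q : ℚ) (x : ℚ) : Set ℕ :=
  {n | ∃ f : Polynomial ℕ, pevQ q f = x ∧ f.eval 1 = n}

/-- For `q = a/b` with `gcd(a,b) = 1`, `b ≥ 2`, `a > b`, any minimum-length factorization
`f` of `aᵏ` in `N₀[q]` uses only atoms `qⁱ` with `i ≥ k`, and all its coefficients lie in
`{0, 1, …, a − 1}`. -/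
theorem stmt15 (a b : ℕ) (hab : Nat.Coprime a b) (hb : 2 ≤ b) (hba : b < a)
    (q : ℚ) (hq : q = (a : ℚ) / (b : ℚ)) (k : ℕ)
    (f : Polynomial ℕ) (hf : pevQ q f = (a : ℚ) ^ k)
    (hmin : IsLeast (LSetQ q ((a : ℚ) ^ k)) (f.eval 1)) :
    (∀ i : ℕ, i < k → f.coeff i = 0) ∧ (∀ i : ℕ, f.coeff i ≤ a - 1) := by
  have hb0 : (b : ℚ) ≠ 0 := by positivity
  have ha0 : 0 < a := by omega
  -- Part 2 first: all coefficients are < a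
  have part2 : ∀ i : ℕ, f.coeff i ≤ a - 1 := by
    intro j
    by_contra hcj
    have hcja : a ≤ f.coeff j := by omega
    set c := f.coeff j with hc
    set g : Polynomial ℕ :=
      f.erase j + Polynomial.monomial j (c - a) + Polynomial.monomial (j+1) b with hg
    have hfe : Polynomial.monomial j c + f.erase j = f := Polynomial.monomial_add_erase f j
    have hpevf : pevQ q (f.erase j) + (c : ℚ) * q ^ j = pevQ q f := by
      conv_rhs => rw [← hfe]
      rw [pevQ, pevQ, Polynomial.eval₂_add, Polynomial.eval₂_monomial]
      simp [add_comm]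
    have hbq : (b : ℚ) * q = (a : ℚ) := by
      rw [hq]; field_simp
    have hpevg : pevQ q g = pevQ q f := by
      rw [hg, pevQ, Polynomial.eval₂_add, Polynomial.eval₂_add,
        Polynomial.eval₂_monomial, Polynomial.eval₂_monomial]
      rw [← hpevf]
      have hsub : ((c - a : ℕ) : ℚ) = (c : ℚ) - (a : ℚ) := Nat.cast_sub hcja
      simp only [pevQ, Nat.coe_castRingHom]
      rw [hsub, pow_succ]
      have : (b : ℚ) * (q ^ j * q) = (a : ℚ) * q ^ j := by
        rw [← hbq]; ring
      rw [this]; ring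
    have hevalg : g.eval 1 = (f.erase j).eval 1 + (c - a) + b := by
      simp [hg]
    have hevalf : f.eval 1 = c + (f.erase j).eval 1 := by
      conv_lhs => rw [← hfe]
      simp
    have hle : f.eval 1 ≤ g.eval 1 := hmin.2 ⟨g, by rw [hpevg, hf], rfl⟩
    omega
  -- the integer identity
  set m := f.natDegree with hm
  have key : (a : ℚ) ^ k * (b:ℚ) ^ m =
      ∑ t ∈ Finset.range (m+1), (f.coeff t : ℚ) * (a:ℚ)^t * (b:ℚ)^(m-t) := by
    rw [← hf, pevQ, Polynomial.eval₂_eq_sum_range, Finset.sum_mul]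
    refine Finset.sum_congr rfl fun t ht => ?_
    have htm : t ≤ m := Nat.lt_succ_iff.mp (Finset.mem_range.mp ht)
    have : (b:ℚ)^m = (b:ℚ)^t * (b:ℚ)^(m-t) := by
      rw [← pow_add, Nat.add_sub_cancel' htm]
    rw [hq, this, div_pow]
    field_simp
    simp only [Nat.coe_castRingHom]
  have keyN : a ^ k * b ^ m =
      ∑ t ∈ Finset.range (m+1), f.coeff t * a^t * b^(m-t) := by
    have := key
    push_cast at this
    exact_mod_cast this
  -- Part 1
  have part1 : ∀ i : ℕ, i < k → f.coeff i = 0 := by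
    intro i
    induction i using Nat.strong_induction_on with
    | _ i ih =>
      intro hik
      by_cases him : m < i
      · exact Polynomial.coeff_eq_zero_of_natDegree_lt him
      push_neg at him
      have himem : i ∈ Finset.range (m+1) := Finset.mem_range.mpr (by omega)
      have hdvd_rest : a ^ (i+1) ∣
          ∑ t ∈ (Finset.range (m+1)).erase i, f.coeff t * a^t * b^(m-t) := by
        refine Finset.dvd_sum fun t ht => ?_
        rcases Finset.mem_erase.mp ht with ⟨hti, htm⟩
        rcases lt_or_gt_of_ne hti with hlt | hgt
        · rw [ih t hlt (by omega)]; simp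
        · exact Dvd.dvd.mul_right (Dvd.dvd.mul_left (pow_dvd_pow a hgt) _) _
      have hdvd_tot : a ^ (i+1) ∣ a ^ k * b ^ m :=
        Dvd.dvd.mul_right (pow_dvd_pow a (by omega)) _
      have hsum := Finset.add_sum_erase _ (fun t => f.coeff t * a^t * b^(m-t)) himem
      have hdvd_i : a ^ (i+1) ∣ f.coeff i * a^i * b^(m-i) := by
        have htot : a ^ (i+1) ∣ f.coeff i * a^i * b^(m-i) +
            ∑ t ∈ (Finset.range (m+1)).erase i, f.coeff t * a^t * b^(m-t) := by
          rw [hsum, ← keyN]; exact hdvd_tot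
        exact (Nat.add_sub_cancel (n := f.coeff i * a^i * b^(m-i))
          (m := ∑ t ∈ (Finset.range (m+1)).erase i, f.coeff t * a^t * b^(m-t))) ▸
          Nat.dvd_sub htot hdvd_rest
      have hdvd : a ∣ f.coeff i * b^(m-i) := by
        have h2 : a ^ i * a ∣ a ^ i * (f.coeff i * b^(m-i)) := by
          rw [← pow_succ]
          have : a ^ i * (f.coeff i * b^(m-i)) = f.coeff i * a^i * b^(m-i) := by ring
          rw [this]; exact hdvd_i
        exact (mul_dvd_mul_iff_left (pow_ne_zero i (by omega) : a ^ i ≠ 0)).mp h2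
      have hda : a ∣ f.coeff i := (hab.pow_right (m-i)).dvd_of_dvd_mul_right hdvd
      have := part2 i
      rcases Nat.eq_zero_or_pos (f.coeff i) with h0 | hpos
      · exact h0
      · have := Nat.le_of_dvd hpos hda
        omega
  exact ⟨part1, part2⟩
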